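/- Let X be a proper, length metric space, Γ a group of isometries of X acting discretely and freely, and f ∈ F. Then: (i) the natural action of Γ on Loc-Geod(X) equipped with the distance f is by isometries and is discrete (for every γ and R ≥ 0 the set {g ∈ Γ : f(gγ,γ) ≤ R} is finite); (ii) the quotient space Γ\Loc-Geod(X) is metrizable, the quotient pseudometric induced by f being a metric inducing the quotient topology. -/

import Mathlib

open Filter Metric Set MeasureTheory Topology
open scoped ENNReal NNReal

noncomputable section

namespace Paper

variable {X : Type*} [MetricSpace X]

/-- The Gromov product `(y,z)_x`. -/
def gromov (x y z : X) : ℝ := (dist x y + dist x z - dist y z) / 2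

/-- `δ`-hyperbolicity via the four points condition on Gromov products. -/
def IsHyperbolic (X : Type*) [MetricSpace X] (δ : ℝ) : Prop :=
  ∀ w x y z : X, min (gromov w x y) (gromov w y z) - δ ≤ gromov w x z

/-- `X` is `P₀`-packed at scale `r₀`: every closed ball of radius `3r₀` contains at most `P₀`
points that are pairwise `2r₀`-separated. -/
def IsPacked (X : Type*) [MetricSpace X] (P₀ : ℕ) (r₀ : ℝ) : Prop :=
  ∀ (x : X) (s : Finset X), (↑s : Set X) ⊆ Metric.closedBall x (3 * r₀) →
    (∀ y ∈ s, ∀ z ∈ s, y ≠ z → 2 * r₀ < dist y z) → s.card ≤ P₀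

/-- A `σ`-geodesic line: an isometric line all whose subsegments are `σ`-geodesics. -/
structure IsSigmaGeodLine (σ : X → X → ℝ → X) (γ : ℝ → X) : Prop where
  isom : Isometry γ
  seg : ∀ s t : ℝ, s ≤ t → ∀ l ∈ Set.Icc (0:ℝ) 1, σ (γ s) (γ t) l = γ (s + l * (t - s))

/-- `(X,σ)` is a GCB-space: `σ` is a convex, consistent, reversible, geodesically complete
geodesic bicombing on the (complete) metric space `X`. -/
structure IsGCB (σ : X → X → ℝ → X) : Prop where
  source : ∀ x y : X, σ x y 0 = x
  target : ∀ x y : X, σ x y 1 = y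
  propor : ∀ x y : X, ∀ s ∈ Set.Icc (0:ℝ) 1, ∀ t ∈ Set.Icc (0:ℝ) 1,
    dist (σ x y s) (σ x y t) = |s - t| * dist x y
  convex : ∀ x y x' y' : X, ConvexOn ℝ (Set.Icc (0:ℝ) 1) fun t => dist (σ x y t) (σ x' y' t)
  consistent : ∀ x y : X, ∀ s t : ℝ, 0 ≤ s → s ≤ t → t ≤ 1 → ∀ l ∈ Set.Icc (0:ℝ) 1,
    σ (σ x y s) (σ x y t) l = σ x y ((1 - l) * s + l * t)
  reversible : ∀ x y : X, ∀ t ∈ Set.Icc (0:ℝ) 1, σ x y t = σ y x (1 - t)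
  geodComplete : ∀ x y : X, ∃ γ : ℝ → X, IsSigmaGeodLine σ γ ∧ ∃ a b : ℝ, a ≤ b ∧
    b - a = dist x y ∧ ∀ l ∈ Set.Icc (0:ℝ) 1, γ (a + l * (b - a)) = σ x y l

section Group

variable (G : Type*) [Group G] [MulAction G X]

/-- A group of isometries is discrete if orbits meet balls in finitely many elements. -/
def DiscreteAction (X : Type*) [MetricSpace X] [MulAction G X] : Prop :=
  ∀ (x : X) (R : ℝ), {g : G | dist x (g • x) ≤ R}.Finite

/-- The action is free. -/
def FreeAction (X : Type*) [MetricSpace X] [MulAction G X] : Prop :=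
  ∀ (g : G) (x : X), g • x = x → g = 1

/-- `Γ` acts by `σ`-isometries. -/
def SigmaEquivariant (σ : X → X → ℝ → X) : Prop :=
  ∀ (g : G) (x y : X), ∀ t ∈ Set.Icc (0:ℝ) 1, g • σ x y t = σ (g • x) (g • y) t

/-- The number of orbit points in the open ball `B(x,T)`. -/
def orbitCount (x : X) (T : ℝ) : ℕ :=
  Nat.card {y : X // y ∈ MulAction.orbit G x ∧ dist x y < T}

/-- The critical exponent `h_Γ = limsup (1/T) log #(Γx ∩ B(x,T))`. -/
def critExp (x : X) : EReal :=
  limsup (fun T : ℝ => ((Real.log (orbitCount G x T) / T : ℝ) : EReal)) atTop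

end Group

/-- The quotient space `Γ\X`. -/
def QuotX (G : Type*) (X : Type*) [Group G] [MulAction G X] [MetricSpace X] :=
  Quotient (MulAction.orbitRel G X)

section Quot

variable (G : Type*) [Group G] [MulAction G X] [IsIsometricSMul G X]

private lemma bddb (x y : X) : BddBelow (Set.range fun g : G => dist x (g • y)) :=
  ⟨0, by rintro _ ⟨g, rfl⟩; exact dist_nonneg⟩

/-- The quotient distance `d(πx,πy) = inf_g d(x, g·y)`. -/
def qdist (a b : QuotX G X) : ℝ :=
  ⨅ g : G, dist (Quotient.out a) (g • Quotient.out b)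

private lemma qdist_self (a : QuotX G X) : qdist G a a = 0 := by
  refine le_antisymm ?_ (le_ciInf fun g => dist_nonneg)
  have h := ciInf_le (bddb G (Quotient.out a) (Quotient.out a)) (1 : G)
  simp only [one_smul, dist_self] at h
  exact h

private lemma qdist_comm_le (a b : QuotX G X) : qdist G a b ≤ qdist G b a := by
  refine le_ciInf fun g => ?_
  have h := ciInf_le (bddb G (Quotient.out a) (Quotient.out b)) g⁻¹
  refine h.trans_eq ?_
  rw [← dist_smul g (Quotient.out a) (g⁻¹ • Quotient.out b), smul_inv_smul, dist_comm]

private lemma qdist_triangle (a b c : QuotX G X) :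
    qdist G a c ≤ qdist G a b + qdist G b c := by
  refine le_of_forall_pos_le_add fun ε hε => ?_
  have h1 : qdist G a b < qdist G a b + ε / 2 := lt_add_of_pos_right _ (half_pos hε)
  have h2 : qdist G b c < qdist G b c + ε / 2 := lt_add_of_pos_right _ (half_pos hε)
  obtain ⟨g, hg⟩ := exists_lt_of_ciInf_lt h1
  obtain ⟨h, hh⟩ := exists_lt_of_ciInf_lt h2
  have key : qdist G a c ≤ dist (Quotient.out a) ((g * h) • Quotient.out c) :=
    ciInf_le (bddb G _ _) (g * h)
  have e : dist (g • Quotient.out b) ((g * h) • Quotient.out c)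
      = dist (Quotient.out b) (h • Quotient.out c) := by
    rw [mul_smul, dist_smul]
  have tri := dist_triangle (Quotient.out a) (g • Quotient.out b) ((g * h) • Quotient.out c)
  rw [e] at tri
  have := key.trans tri
  linarith

/-- The quotient pseudometric on `Γ\X` (a genuine metric whenever the action is discrete
and free). -/
instance : PseudoMetricSpace (QuotX G X) where
  dist := qdist G
  dist_self := qdist_self G
  dist_comm a b := le_antisymm (qdist_comm_le G a b) (qdist_comm_le G b a)
  dist_triangle := qdist_triangle G

/-- The projection `π : X → Γ\X`. -/
def projQ (x : X) : QuotX G X := Quotient.mk (MulAction.orbitRel G X) x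

lemma projQ_dist_le (x y : X) : dist (projQ G x) (projQ G y) ≤ dist x y := by
  obtain ⟨k, hk⟩ := MulAction.mem_orbit_iff.mp
    ((MulAction.orbitRel_apply (G := G)).mp (Quotient.mk_out (s := MulAction.orbitRel G X) x))
  obtain ⟨l, hl⟩ := MulAction.mem_orbit_iff.mp
    ((MulAction.orbitRel_apply (G := G)).mp (Quotient.mk_out (s := MulAction.orbitRel G X) y))
  have h1 : dist (projQ G x) (projQ G y)
      ≤ dist (Quotient.out (projQ G x)) ((k * l⁻¹) • Quotient.out (projQ G y)) :=
    ciInf_le (bddb G _ _) (k * l⁻¹)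
  have hk2 : Quotient.out (projQ G x) = k • x := hk.symm
  have hl2 : Quotient.out (projQ G y) = l • y := hl.symm
  rw [hk2, hl2, smul_smul, inv_mul_cancel_right, dist_smul] at h1
  exact h1

/-- `π` as a continuous (1-Lipschitz) map. -/
def projCM : C(X, QuotX G X) :=
  ⟨projQ G, (LipschitzWith.of_dist_le_mul (K := 1) fun a b => by
    simpa using projQ_dist_le G a b).continuous⟩

end Quot

end Paper

namespace Paper

variable {X : Type*} [MetricSpace X]

/-- The space of local geodesic lines of a (pseudo)metric space `Y`, as a subset of the space
of continuous maps `ℝ → Y` (with the topology of uniform convergence on compact sets). -/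
def LocGeodSet (Y : Type*) [PseudoMetricSpace Y] : Set C(ℝ, Y) :=
  {γ | ∀ t : ℝ, ∃ ε > 0, ∀ s ∈ Set.Icc (t - ε) (t + ε), ∀ u ∈ Set.Icc (t - ε) (t + ε),
    dist (γ s) (γ u) = |s - u|}

/-- The set of (parametrized) `σ`-geodesic lines of `X`. -/
def SigmaGeodLines (σ : X → X → ℝ → X) : Set C(ℝ, X) := {γ | IsSigmaGeodLine σ ⇑γ}

section Proj

variable (G : Type*) [Group G] [MulAction G X] [IsIsometricSMul G X]

/-- Post-composition with the projection `π : X → Γ\X`. -/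
def projComp (γ : C(ℝ, X)) : C(ℝ, QuotX G X) := (projCM G).comp γ

/-- The space `Loc-Geod_σ(Γ\X)`: the image of the `σ`-geodesic lines of `X` under `Π`. -/
def LocGeodQuotSet (σ : X → X → ℝ → X) : Set C(ℝ, QuotX G X) :=
  projComp G '' SigmaGeodLines σ

end Proj

/-- Translation of `ℝ` by `c`, as a continuous map. -/
def trCM (c : ℝ) : C(ℝ, ℝ) := ⟨fun t => t + c, continuous_add_right c⟩

/-- The reparametrization flow `Φ_c γ = γ(· + c)`. -/
def shiftCM {Y : Type*} [TopologicalSpace Y] (c : ℝ) (γ : C(ℝ, Y)) : C(ℝ, Y) := γ.comp (trCM c)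

lemma shift_sigma {σ : X → X → ℝ → X} (c : ℝ) {γ : ℝ → X} (h : IsSigmaGeodLine σ γ) :
    IsSigmaGeodLine σ fun t => γ (t + c) := by
  constructor
  · exact h.isom.comp (Isometry.of_dist_eq fun a b => dist_add_right a b c)
  · intro s t hst l hl
    have h2 := h.seg (s + c) (t + c) (by linarith) l hl
    calc σ (γ (s + c)) (γ (t + c)) l = γ (s + c + l * (t + c - (s + c))) := h2
    _ = γ (s + l * (t - s) + c) := by ring_nf

section Flow

variable (G : Type*) [Group G] [MulAction G X] [IsIsometricSMul G X]

lemma shift_mem {σ : X → X → ℝ → X} (c : ℝ) {γ : C(ℝ, QuotX G X)}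
    (h : γ ∈ LocGeodQuotSet G σ) : shiftCM c γ ∈ LocGeodQuotSet G σ := by
  obtain ⟨γ', hγ', rfl⟩ := h
  exact ⟨shiftCM c γ', shift_sigma c hγ', ContinuousMap.ext fun t => rfl⟩

/-- The time-one map `Φ₁` of the reparametrization flow on `Loc-Geod_σ(Γ\X)`. -/
def flowOne (σ : X → X → ℝ → X) : ↥(LocGeodQuotSet G σ) → ↥(LocGeodQuotSet G σ) :=
  fun γ => ⟨shiftCM 1 γ.1, shift_mem G 1 γ.2⟩

end Flow

/-- The class `F` of admissible weight functions. -/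
structure AdmissibleF (f : ℝ → ℝ) : Prop where
  cont : Continuous f
  pos : ∀ s, 0 < f s
  symm : ∀ s : ℝ, f (-s) = f s
  integrable : MeasureTheory.Integrable f
  mass : ∫ s, f s = 1
  momentIntegrable : MeasureTheory.Integrable fun s : ℝ => 2 * |s| * f s

/-- The constant `C(f) = ∫ 2|s| f(s) ds`. -/
def Cf (f : ℝ → ℝ) : ℝ := ∫ s : ℝ, 2 * |s| * f s

/-- The distance `f(γ,γ') = ∫ d(γ(s),γ'(s)) f(s) ds` on spaces of (local) geodesics. -/
def fDist (f : ℝ → ℝ) {Y : Type*} [PseudoMetricSpace Y] (γ γ' : C(ℝ, Y)) : ℝ :=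
  ∫ s : ℝ, dist (γ s) (γ' s) * f s

section Dynamics

variable {Y : Type*}

/-- The dynamical distance `d^n(y,y') = max_{0 ≤ i ≤ n-1} d(T^i y, T^i y')`. -/
def dynDist (d : Y → Y → ℝ) (T : Y → Y) (n : ℕ) (a b : Y) : ℝ :=
  ⨆ i : Fin n, d (T^[(i : ℕ)] a) (T^[(i : ℕ)] b)

/-- The dynamical ball `B_{d^n}(a,r)`. -/
def dynBall (d : Y → Y → ℝ) (T : Y → Y) (n : ℕ) (a : Y) (r : ℝ) : Set Y :=
  {b | dynDist d T n a b < r}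

/-- The covering number of `K` at scale `r` with respect to a distance function `d`. -/
def covNum (d : Y → Y → ℝ) (K : Set Y) (r : ℝ) : ℕ :=
  sInf {m : ℕ | ∃ c : Fin m → Y, K ⊆ ⋃ i, {b | d (c i) b < r}}

/-- The Bowen entropy of `K` w.r.t. `d`: `lim_{r→0} limsup_n (1/n) log Cov_{d^n}(K,r)`. -/
def covEntropy (d : Y → Y → ℝ) (T : Y → Y) (K : Set Y) : EReal :=
  ⨆ r : {r : ℝ // 0 < r},
    limsup (fun n : ℕ => ((Real.log (covNum (dynDist d T n) K r.1) / n : ℝ) : EReal)) atTop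

/-- The entropy of (the join of the first `n` iterates of) a finite measurable partition. -/
def partitionEnt [MeasurableSpace Y] (μ : Measure Y) (T : Y → Y) {k : ℕ}
    (P : Fin k → Set Y) (n : ℕ) : ℝ :=
  ∑ a : Fin n → Fin k, Real.negMulLog (μ (⋂ i : Fin n, T^[(i : ℕ)] ⁻¹' P (a i))).toReal

/-- The Kolmogorov–Sinai entropy of `μ`. -/
def ksEntropy [MeasurableSpace Y] (μ : Measure Y) (T : Y → Y) : EReal :=
  ⨆ (k : ℕ) (P : Fin k → Set Y)
    (_ : (∀ i, MeasurableSet (P i)) ∧ Pairwise (Function.onFun Disjoint P) ∧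
      ⋃ i, P i = Set.univ),
    ((liminf (fun n : ℕ => partitionEnt μ T P n / n) atTop : ℝ) : EReal)

/-- `d` is the distance of a metric inducing the topology of `Y`. -/
def InducesTopology [ts : TopologicalSpace Y] (d : Y → Y → ℝ) : Prop :=
  ∃ m : MetricSpace Y, m.toPseudoMetricSpace.toUniformSpace.toTopologicalSpace = ts ∧
    ∀ a b : Y, @dist Y m.toPseudoMetricSpace.toDist a b = d a b

/-- `d` is the distance of a complete metric inducing the topology of `Y`. -/
def InducesTopologyComplete [ts : TopologicalSpace Y] (d : Y → Y → ℝ) : Prop :=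
  ∃ m : MetricSpace Y, m.toPseudoMetricSpace.toUniformSpace.toTopologicalSpace = ts ∧
    (∀ a b : Y, @dist Y m.toPseudoMetricSpace.toDist a b = d a b) ∧
    @CompleteSpace Y m.toPseudoMetricSpace.toUniformSpace

/-- The upper local entropy of `μ` with respect to the distance `d`. -/
def upperLocalEnt [MeasurableSpace Y] (μ : Measure Y) (T : Y → Y) (d : Y → Y → ℝ) : EReal :=
  essSup (fun y : Y =>
    ⨆ r : {r : ℝ // 0 < r},
      limsup (fun n : ℕ =>
        ((-Real.log (μ (dynBall d T n y r.1)).toReal / n : ℝ) : EReal)) atTop) μ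

/-- The lower local entropy of `μ` with respect to the distance `d`. -/
def lowerLocalEnt [MeasurableSpace Y] (μ : Measure Y) (T : Y → Y) (d : Y → Y → ℝ) : EReal :=
  essInf (fun y : Y =>
    ⨆ r : {r : ℝ // 0 < r},
      liminf (fun n : ℕ =>
        ((-Real.log (μ (dynBall d T n y r.1)).toReal / n : ℝ) : EReal)) atTop) μ

/-- The ergodic invariant probability measures of `(Y,T)`. -/
def ErgProb [MeasurableSpace Y] (T : Y → Y) :=
  {μ : Measure Y // IsProbabilityMeasure μ ∧ Ergodic T μ}

/-- The topological entropy, defined as the supremum of the Kolmogorov–Sinai entropies of the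
ergodic invariant probability measures. -/
def topEnt [MeasurableSpace Y] (T : Y → Y) : EReal :=
  ⨆ μ : ErgProb T, ksEntropy μ.1 T

/-- The upper local entropy of the system: `sup_μ inf_d` of the upper local entropies. -/
def upperLocalEntSys [TopologicalSpace Y] [MeasurableSpace Y] (T : Y → Y) : EReal :=
  ⨆ μ : ErgProb T, ⨅ d : {d : Y → Y → ℝ // InducesTopologyComplete d},
    upperLocalEnt μ.1 T d.1

/-- The lower local entropy of the system: `sup_μ inf_d` of the lower local entropies. -/
def lowerLocalEntSys [TopologicalSpace Y] [MeasurableSpace Y] (T : Y → Y) : EReal :=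
  ⨆ μ : ErgProb T, ⨅ d : {d : Y → Y → ℝ // InducesTopologyComplete d},
    lowerLocalEnt μ.1 T d.1

/-- The invariant topological entropy: in the Bowen formula the supremum is restricted to the
compact `T`-invariant subsets. -/
def invTopEnt [TopologicalSpace Y] (T : Y → Y) : EReal :=
  ⨅ d : {d : Y → Y → ℝ // InducesTopology d},
    ⨆ K : {K : Set Y // IsCompact K ∧ T '' K = K}, covEntropy d.1 T K.1

end Dynamics

end Paper

namespace Paper

/-- `X` is a length space: the distance is the infimum of the lengths (total variations) of the
continuous paths joining two points. -/
def IsLengthSpace (X : Type*) [MetricSpace X] : Prop :=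
  ∀ x y : X, ENNReal.ofReal (dist x y) =
    ⨅ (γ : C(unitInterval, X)) (_ : γ 0 = x) (_ : γ 1 = y), eVariationOn γ Set.univ

/-- The action of an isometry `g` on continuous maps `ℝ → X` by postcomposition. -/
def smulCM {X : Type*} [MetricSpace X] (G : Type*) [Group G] [MulAction G X]
    [IsIsometricSMul G X] (g : G) (γ : C(ℝ, X)) : C(ℝ, X) :=
  ⟨fun t => g • γ t, ((isometry_smul X g).continuous).comp γ.continuous⟩

/-- The orbit equivalence relation of `Γ` on `Loc-Geod(X)`. -/
def locRel {X : Type*} [MetricSpace X] (G : Type*) [Group G] [MulAction G X]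
    [IsIsometricSMul G X] (a b : ↥(LocGeodSet X)) : Prop :=
  ∃ g : G, smulCM G g a.1 = b.1

end Paper

namespace Paper

section StatementElevenAux

variable {X : Type*} [MetricSpace X]

open MeasureTheory

/-- Local geodesics are 1-Lipschitz (forward version). -/
lemma locGeod_lip_le {γ : C(ℝ, X)} (h : γ ∈ LocGeodSet X) {s t : ℝ} (hst : s ≤ t) :
    dist (γ s) (γ t) ≤ t - s := by
  set A : Set ℝ := {u | u ∈ Set.Icc s t ∧ dist (γ s) (γ u) ≤ u - s} with hA
  have hne : A.Nonempty := ⟨s, ⟨le_refl s, hst⟩, by simp⟩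
  have hbdd : BddAbove A := ⟨t, fun u hu => hu.1.2⟩
  have hclosed : IsClosed A := by
    have hcont : Continuous fun u : ℝ => dist (γ s) (γ u) - (u - s) :=
      (continuous_const.dist γ.continuous).sub (continuous_id.sub continuous_const)
    have hAeq : A = Set.Icc s t ∩ (fun u : ℝ => dist (γ s) (γ u) - (u - s)) ⁻¹' Set.Iic 0 := by
      ext u
      simp only [hA, Set.mem_setOf_eq, Set.mem_inter_iff, Set.mem_preimage, Set.mem_Iic]
      constructor
      · rintro ⟨h1, h2⟩; exact ⟨h1, by linarith⟩
      · rintro ⟨h1, h2⟩; exact ⟨h1, by linarith⟩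
    rw [hAeq]
    exact isClosed_Icc.inter (IsClosed.preimage hcont isClosed_Iic)
  have hcA : sSup A ∈ A := hclosed.csSup_mem hne hbdd
  set c := sSup A with hc
  rcases eq_or_lt_of_le hcA.1.2 with hct | hclt
  · have h2 := hcA.2
    rw [hct] at h2
    exact h2
  · exfalso
    obtain ⟨ε, hε, hloc⟩ := h c
    set u := min (c + ε) t with hu
    have huc : c < u := lt_min (by linarith) hclt
    have huA : u ∈ A := by
      refine ⟨⟨le_trans hcA.1.1 huc.le, min_le_right _ _⟩, ?_⟩
      have hd : dist (γ c) (γ u) = |c - u| :=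
        hloc c ⟨by linarith, by linarith⟩ u
          ⟨by linarith, min_le_left _ _⟩
      calc dist (γ s) (γ u) ≤ dist (γ s) (γ c) + dist (γ c) (γ u) := dist_triangle _ _ _
        _ ≤ (c - s) + (u - c) := by
            rw [hd, abs_of_nonpos (by linarith)]
            have := hcA.2
            linarith
        _ = u - s := by ring
    have : u ≤ c := le_csSup hbdd huA
    linarith

/-- Local geodesics are 1-Lipschitz. -/
lemma locGeod_lip {γ : C(ℝ, X)} (h : γ ∈ LocGeodSet X) (s t : ℝ) :
    dist (γ s) (γ t) ≤ |s - t| := by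
  rcases le_total s t with hst | hst
  · have := locGeod_lip_le h hst
    rw [abs_of_nonpos (by linarith)]
    linarith
  · have := locGeod_lip_le h hst
    rw [abs_of_nonneg (by linarith), dist_comm]
    linarith

lemma dist_comp_bound {a b : C(ℝ, X)} (ha : a ∈ LocGeodSet X) (hb : b ∈ LocGeodSet X)
    (s t : ℝ) : dist (a s) (b s) ≤ dist (a t) (b t) + 2 * |s - t| := by
  have h4 := dist_triangle4 (a s) (a t) (b t) (b s)
  have h1 := locGeod_lip ha s t
  have h2 := locGeod_lip hb t s
  have h3 : |t - s| = |s - t| := abs_sub_comm t s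
  linarith

variable {f : ℝ → ℝ}

lemma integrable_dist_mul (hf : AdmissibleF f) {a b : C(ℝ, X)}
    (ha : a ∈ LocGeodSet X) (hb : b ∈ LocGeodSet X) :
    Integrable fun s => dist (a s) (b s) * f s := by
  have hcont : Continuous fun s => dist (a s) (b s) * f s :=
    (a.continuous.dist b.continuous).mul hf.cont
  refine ((hf.integrable.const_mul (dist (a 0) (b 0))).add hf.momentIntegrable).mono'
    hcont.aestronglyMeasurable ?_
  filter_upwards with s
  rw [Real.norm_eq_abs, abs_of_nonneg (mul_nonneg dist_nonneg (hf.pos s).le)]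
  simp only [Pi.add_apply]
  have h1 := dist_comp_bound ha hb s 0
  have h2 : |s - 0| = |s| := by simp
  rw [h2] at h1
  nlinarith [(hf.pos s).le, dist_nonneg (x := a s) (y := b s)]

lemma fDist_nonneg (hf : AdmissibleF f) (a b : C(ℝ, X)) : 0 ≤ fDist f a b :=
  integral_nonneg fun s => mul_nonneg dist_nonneg (hf.pos s).le

lemma fDist_self (a : C(ℝ, X)) : fDist f a a = 0 := by
  simp [fDist]

lemma fDist_comm (a b : C(ℝ, X)) : fDist f a b = fDist f b a := by
  unfold fDist
  congr 1
  funext s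
  rw [dist_comm]

lemma fDist_triangle (hf : AdmissibleF f) {a b c : C(ℝ, X)} (ha : a ∈ LocGeodSet X)
    (hb : b ∈ LocGeodSet X) (hc : c ∈ LocGeodSet X) :
    fDist f a c ≤ fDist f a b + fDist f b c := by
  unfold fDist
  rw [← integral_add (integrable_dist_mul hf ha hb) (integrable_dist_mul hf hb hc)]
  refine integral_mono (integrable_dist_mul hf ha hc)
    ((integrable_dist_mul hf ha hb).add (integrable_dist_mul hf hb hc)) fun s => ?_
  have := dist_triangle (a s) (b s) (c s)
  have := (hf.pos s).le
  simp only
  nlinarith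

lemma fDist_lower (hf : AdmissibleF f) {a b : C(ℝ, X)} (ha : a ∈ LocGeodSet X)
    (hb : b ∈ LocGeodSet X) : dist (a 0) (b 0) - Cf f ≤ fDist f a b := by
  have hint1 : Integrable fun s => dist (a 0) (b 0) * f s - 2 * |s| * f s :=
    (hf.integrable.const_mul _).sub hf.momentIntegrable
  have hle : (fun s => dist (a 0) (b 0) * f s - 2 * |s| * f s) ≤
      fun s => dist (a s) (b s) * f s := by
    intro s
    have h1 := dist_comp_bound ha hb 0 s
    have h2 : |(0:ℝ) - s| = |s| := by simp [abs_sub_comm]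
    rw [h2] at h1
    simp only
    nlinarith [(hf.pos s).le]
  have hmono := integral_mono hint1 (integrable_dist_mul hf ha hb) hle
  rw [integral_sub (hf.integrable.const_mul _) hf.momentIntegrable,
    MeasureTheory.integral_const_mul, hf.mass] at hmono
  unfold fDist Cf
  linarith

lemma fDist_eq_zero (hf : AdmissibleF f) {a b : C(ℝ, X)} (ha : a ∈ LocGeodSet X)
    (hb : b ∈ LocGeodSet X) (h : fDist f a b = 0) : a = b := by
  have hint := integrable_dist_mul hf ha hb
  have hnn : 0 ≤ fun s => dist (a s) (b s) * f s :=
    fun s => mul_nonneg dist_nonneg (hf.pos s).le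
  have hae := (integral_eq_zero_iff_of_nonneg hnn hint).mp h
  have hcont : Continuous fun s => dist (a s) (b s) * f s :=
    (a.continuous.dist b.continuous).mul hf.cont
  have heq : (fun s => dist (a s) (b s) * f s) = (fun _ => (0:ℝ)) :=
    (Continuous.ae_eq_iff_eq (μ := volume) hcont continuous_const).mp hae
  ext t
  have ht := congrFun heq t
  have : dist (a t) (b t) = 0 := by
    by_contra hd
    have h1 : 0 < dist (a t) (b t) := lt_of_le_of_ne dist_nonneg (Ne.symm hd)
    nlinarith [hf.pos t]
  exact dist_le_zero.mp this.le

/-- Small `fDist` implies uniform closeness on compact intervals. -/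
lemma close_of_fDist_small (hf : AdmissibleF f) {T ε : ℝ} (hT : 0 < T) (hε : 0 < ε) :
    ∃ δ > 0, ∀ a b : C(ℝ, X), a ∈ LocGeodSet X → b ∈ LocGeodSet X →
      fDist f a b < δ → ∀ t ∈ Set.Icc (-T) T, dist (a t) (b t) < ε := by
  set ε' := min ε 1 with hε'def
  have hε'0 : 0 < ε' := lt_min hε one_pos
  have hε'1 : ε' ≤ 1 := min_le_right _ _
  have hε'ε : ε' ≤ ε := min_le_left _ _
  obtain ⟨z, hz, hzmin⟩ := (isCompact_Icc (a := -T - 1) (b := T + 1)).exists_isMinOn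
    ⟨0, by constructor <;> linarith⟩ hf.cont.continuousOn
  set m := f z with hm
  have hm0 : 0 < m := hf.pos z
  refine ⟨ε' / 2 * m * (ε' / 4), by positivity, fun a b ha hb hsmall t ht => ?_⟩
  by_contra hcon
  push_neg at hcon
  have hint := integrable_dist_mul hf ha hb
  have key : ∀ s ∈ Set.Icc t (t + ε' / 4), ε' / 2 * m ≤ dist (a s) (b s) * f s := by
    intro s hs
    have h1 := dist_comp_bound ha hb t s
    have h2 : |t - s| ≤ ε' / 4 := by
      rw [abs_of_nonpos (by linarith [hs.1])]
      linarith [hs.2]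
    have hd : ε' / 2 ≤ dist (a s) (b s) := by linarith
    have hfs : m ≤ f s := hzmin ⟨by linarith [ht.1, hs.1], by linarith [ht.2, hs.2]⟩
    exact mul_le_mul hd hfs hm0.le dist_nonneg
  have h1 : ∫ s in Set.Icc t (t + ε' / 4), dist (a s) (b s) * f s ≤ fDist f a b :=
    setIntegral_le_integral hint
      (Filter.Eventually.of_forall fun s => mul_nonneg dist_nonneg (hf.pos s).le)
  have hvol : (volume (Set.Icc t (t + ε' / 4))).toReal = ε' / 4 := by
    rw [Real.volume_Icc, ENNReal.toReal_ofReal (by linarith)]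
    ring
  have h2 : ε' / 2 * m * (ε' / 4) ≤ ∫ s in Set.Icc t (t + ε' / 4), dist (a s) (b s) * f s := by
    have := setIntegral_ge_of_const_le_real (μ := volume) (c := ε' / 2 * m)
      (measurableSet_Icc (a := t) (b := t + ε' / 4))
      (by rw [Real.volume_Icc]; exact ENNReal.ofReal_ne_top) key hint.integrableOn
    rw [measureReal_def, hvol] at this
    exact this
  linarith

/-- Uniform closeness on a large compact interval forces small `fDist`. -/
lemma fDist_small_of_close (hf : AdmissibleF f) {ε : ℝ} (hε : 0 < ε) :
    ∃ T > 0, ∃ η > 0, ∀ a b : C(ℝ, X), a ∈ LocGeodSet X → b ∈ LocGeodSet X →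
      (∀ t ∈ Set.Icc (-T) T, dist (a t) (b t) ≤ η) → fDist f a b < ε := by
  have htail : Filter.Tendsto (fun T : ℝ => ∫ s in (-T)..T, 2 * |s| * f s)
      Filter.atTop (nhds (∫ s, 2 * |s| * f s)) :=
    intervalIntegral_tendsto_integral hf.momentIntegrable tendsto_neg_atTop_atBot
      Filter.tendsto_id
  obtain ⟨T, hT1, hTtail⟩ : ∃ T : ℝ, 1 ≤ T ∧
      ∫ s in (Set.Icc (-T) T)ᶜ, 2 * |s| * f s < ε / 3 := by
    have hev := (htail.eventually (eventually_gt_nhds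
      (show (∫ s, 2 * |s| * f s) - ε / 3 < ∫ s, 2 * |s| * f s by linarith))).and
      (Filter.eventually_ge_atTop (1 : ℝ))
    obtain ⟨T, hT2, hT1⟩ := hev.exists
    refine ⟨T, hT1, ?_⟩
    have hsplit := integral_add_compl (measurableSet_Icc (a := -T) (b := T))
      hf.momentIntegrable
    have hIcc : ∫ s in Set.Icc (-T) T, 2 * |s| * f s = ∫ s in (-T)..T, 2 * |s| * f s := by
      rw [intervalIntegral.integral_of_le (by linarith), integral_Icc_eq_integral_Ioc]
    rw [hIcc] at hsplit
    linarith
  have hT0 : (0:ℝ) < T := by linarith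
  refine ⟨T, hT0, ε / 4, by positivity, fun a b ha hb hclose => ?_⟩
  have hint := integrable_dist_mul hf ha hb
  have hsplit := integral_add_compl (measurableSet_Icc (a := -T) (b := T)) hint
  have hIn : ∫ s in Set.Icc (-T) T, dist (a s) (b s) * f s ≤ ε / 4 := by
    have step1 : ∫ s in Set.Icc (-T) T, dist (a s) (b s) * f s ≤
        ∫ s in Set.Icc (-T) T, ε / 4 * f s := by
      refine setIntegral_mono_on hint.integrableOn
        ((hf.integrable.const_mul _).integrableOn) measurableSet_Icc fun s hs => ?_
      exact mul_le_mul_of_nonneg_right (hclose s hs) (hf.pos s).le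
    have step2 : ∫ s in Set.Icc (-T) T, ε / 4 * f s ≤ ε / 4 := by
      rw [MeasureTheory.integral_const_mul]
      have h1 : ∫ s in Set.Icc (-T) T, f s ≤ ∫ s, f s :=
        setIntegral_le_integral hf.integrable
          (Filter.Eventually.of_forall fun s => (hf.pos s).le)
      rw [hf.mass] at h1
      nlinarith [setIntegral_nonneg (measurableSet_Icc (a := -T) (b := T))
        (fun s _ => (hf.pos s).le) (μ := volume)]
    linarith
  have hOut : ∫ s in (Set.Icc (-T) T)ᶜ, dist (a s) (b s) * f s ≤ ε / 4 + ε / 3 := by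
    have bnd : ∀ s ∈ (Set.Icc (-T) T)ᶜ,
        dist (a s) (b s) * f s ≤ ε / 4 * f s + 2 * |s| * f s := by
      intro s hs
      simp only [Set.mem_compl_iff, Set.mem_Icc, not_and_or, not_le] at hs
      have hd : dist (a s) (b s) ≤ ε / 4 + 2 * |s| := by
        rcases hs with hs | hs
        · have h1 := dist_comp_bound ha hb s (-T)
          have h2 := hclose (-T) ⟨le_refl _, by linarith⟩
          have h3 : |s - (-T)| ≤ |s| := by
            rw [abs_of_nonpos (by linarith), abs_of_nonpos (by linarith)]
            linarith
          linarith
        · have h1 := dist_comp_bound ha hb s T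
          have h2 := hclose T ⟨by linarith, le_refl _⟩
          have h3 : |s - T| ≤ |s| := by
            rw [abs_of_nonneg (by linarith), abs_of_nonneg (by linarith)]
            linarith
          linarith
      nlinarith [(hf.pos s).le]
    have hi1 : IntegrableOn (fun s => ε / 4 * f s + 2 * |s| * f s) (Set.Icc (-T) T)ᶜ volume :=
      ((hf.integrable.const_mul _).add hf.momentIntegrable).integrableOn
    have hmono := setIntegral_mono_on hint.integrableOn hi1
      (measurableSet_Icc (a := -T) (b := T)).compl bnd
    have hsum : ∫ s in (Set.Icc (-T) T)ᶜ, (ε / 4 * f s + 2 * |s| * f s) =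
        ε / 4 * (∫ s in (Set.Icc (-T) T)ᶜ, f s) + ∫ s in (Set.Icc (-T) T)ᶜ, 2 * |s| * f s := by
      rw [integral_add ((hf.integrable.const_mul _).integrableOn)
        (hf.momentIntegrable.integrableOn), MeasureTheory.integral_const_mul]
    have hcf : ∫ s in (Set.Icc (-T) T)ᶜ, f s ≤ 1 := by
      have h1 := integral_add_compl (measurableSet_Icc (a := -T) (b := T)) hf.integrable
      have h2 : 0 ≤ ∫ s in Set.Icc (-T) T, f s :=
        setIntegral_nonneg measurableSet_Icc fun s _ => (hf.pos s).le
      rw [hf.mass] at h1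
      linarith
    have hcf0 : 0 ≤ ∫ s in (Set.Icc (-T) T)ᶜ, f s :=
      setIntegral_nonneg (measurableSet_Icc (a := -T) (b := T)).compl
        fun s _ => (hf.pos s).le
    nlinarith
  have hfd : fDist f a b = (∫ s in Set.Icc (-T) T, dist (a s) (b s) * f s) +
      ∫ s in (Set.Icc (-T) T)ᶜ, dist (a s) (b s) * f s := hsplit.symm
  rw [hfd]
  linarith

section GroupAux

variable (G : Type*) [Group G] [MulAction G X] [IsIsometricSMul G X]

lemma fDist_smulCM (f : ℝ → ℝ) (g : G) (γ γ' : C(ℝ, X)) :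
    fDist f (smulCM G g γ) (smulCM G g γ') = fDist f γ γ' := by
  unfold fDist
  congr 1
  funext s
  simp only [smulCM, ContinuousMap.coe_mk]
  rw [dist_smul]

lemma smulCM_mem {γ : C(ℝ, X)} (h : γ ∈ LocGeodSet X) (g : G) :
    smulCM G g γ ∈ LocGeodSet X := by
  intro t
  obtain ⟨ε, hε, hloc⟩ := h t
  refine ⟨ε, hε, fun s hs u hu => ?_⟩
  simp only [smulCM, ContinuousMap.coe_mk]
  rw [dist_smul]
  exact hloc s hs u hu

lemma smulCM_mul (g h : G) (γ : C(ℝ, X)) :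
    smulCM G g (smulCM G h γ) = smulCM G (g * h) γ :=
  ContinuousMap.ext fun t => (mul_smul g h (γ t)).symm

lemma smulCM_one (γ : C(ℝ, X)) : smulCM G 1 γ = γ :=
  ContinuousMap.ext fun t => one_smul G (γ t)

lemma finite_fDist_le (hf : AdmissibleF f) (hdisc : DiscreteAction G X)
    {a b : C(ℝ, X)} (ha : a ∈ LocGeodSet X) (hb : b ∈ LocGeodSet X) (R : ℝ) :
    {g : G | fDist f a (smulCM G g b) ≤ R}.Finite := by
  apply (hdisc (b 0) (dist (b 0) (a 0) + R + Cf f)).subset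
  intro g hg
  simp only [Set.mem_setOf_eq] at hg ⊢
  have hlow := fDist_lower hf ha (smulCM_mem G hb g)
  have hcoe : (smulCM G g b) 0 = g • b 0 := rfl
  rw [hcoe] at hlow
  have h1 : dist (a 0) (g • b 0) - Cf f ≤ R := le_trans hlow hg
  calc dist (b 0) (g • b 0) ≤ dist (b 0) (a 0) + dist (a 0) (g • b 0) :=
        dist_triangle _ _ _
    _ ≤ dist (b 0) (a 0) + R + Cf f := by linarith

private lemma bddb' (f : ℝ → ℝ) (hf : AdmissibleF f) (a b : C(ℝ, X)) :
    BddBelow (Set.range fun g : G => fDist f a (smulCM G g b)) :=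
  ⟨0, by rintro _ ⟨g, rfl⟩; exact fDist_nonneg hf _ _⟩

/-- The candidate quotient distance on `Γ\Loc-Geod(X)`. -/
def qdL (f : ℝ → ℝ) : Quot (locRel G (X := X)) → Quot (locRel G (X := X)) → ℝ :=
  Quot.lift₂ (fun a b : ↥(LocGeodSet X) => ⨅ g : G, fDist f a.1 (smulCM G g b.1))
    (by
      rintro a b₁ b₂ ⟨h, hh⟩
      have hrange : (Set.range fun g : G => fDist f a.1 (smulCM G g b₂.1)) =
          Set.range fun g : G => fDist f a.1 (smulCM G g b₁.1) := by
        ext x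
        constructor
        · rintro ⟨g, rfl⟩
          refine ⟨g * h, ?_⟩
          show fDist f a.1 (smulCM G (g * h) b₁.1) = fDist f a.1 (smulCM G g b₂.1)
          rw [← hh, smulCM_mul]
        · rintro ⟨g, rfl⟩
          refine ⟨g * h⁻¹, ?_⟩
          show fDist f a.1 (smulCM G (g * h⁻¹) b₂.1) = fDist f a.1 (smulCM G g b₁.1)
          rw [← hh, smulCM_mul, inv_mul_cancel_right]
      show (⨅ g : G, fDist f a.1 (smulCM G g b₁.1)) = ⨅ g : G, fDist f a.1 (smulCM G g b₂.1)
      rw [← sInf_range, ← sInf_range, hrange])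
    (by
      rintro a₁ a₂ b ⟨h, hh⟩
      have hpt : ∀ g : G, fDist f a₂.1 (smulCM G g b.1) =
          fDist f a₁.1 (smulCM G (h⁻¹ * g) b.1) := by
        intro g
        rw [← hh, ← fDist_smulCM G f h⁻¹ (smulCM G h a₁.1) (smulCM G g b.1),
          smulCM_mul, inv_mul_cancel, smulCM_one, smulCM_mul]
      have hrange : (Set.range fun g : G => fDist f a₂.1 (smulCM G g b.1)) =
          Set.range fun g : G => fDist f a₁.1 (smulCM G g b.1) := by
        ext x
        constructor
        · rintro ⟨g, rfl⟩
          exact ⟨h⁻¹ * g, (hpt g).symm⟩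
        · rintro ⟨g, rfl⟩
          refine ⟨h * g, ?_⟩
          show fDist f a₂.1 (smulCM G (h * g) b.1) = fDist f a₁.1 (smulCM G g b.1)
          rw [hpt (h * g), inv_mul_cancel_left]
      show (⨅ g : G, fDist f a₁.1 (smulCM G g b.1)) = ⨅ g : G, fDist f a₂.1 (smulCM G g b.1)
      rw [← sInf_range, ← sInf_range, hrange])

end GroupAux

end StatementElevenAux

end Paper

open Paper in
/-- Let `X` be a proper length metric space, `Γ = G` a group of isometries
acting discretely and freely, and `f ∈ F`. Then: (i) the natural action of `Γ` on
`(Loc-Geod(X), f)` is by isometries and is discrete; (ii) the quotient `Γ\Loc-Geod(X)` is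
metrizable, the quotient pseudometric induced by `f` being a metric inducing the quotient
topology. -/
theorem statement_11 {X : Type*} [MetricSpace X] [ProperSpace X] (hlen : IsLengthSpace X)
    (G : Type*) [Group G] [MulAction G X] [IsIsometricSMul G X]
    (hdisc : DiscreteAction G X) (hfree : FreeAction G X)
    (f : ℝ → ℝ) (hf : AdmissibleF f) :
    (∀ (g : G) (γ γ' : C(ℝ, X)), fDist f (smulCM G g γ) (smulCM G g γ') = fDist f γ γ') ∧
    (∀ γ ∈ LocGeodSet X, ∀ R : ℝ, {g : G | fDist f (smulCM G g γ) γ ≤ R}.Finite) ∧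
    ∃ m : MetricSpace (Quot (locRel G (X := X))),
      (∀ a b : ↥(LocGeodSet X),
        @dist _ m.toPseudoMetricSpace.toDist (Quot.mk _ a) (Quot.mk _ b)
          = ⨅ g : G, fDist f a.1 (smulCM G g b.1)) ∧
      m.toPseudoMetricSpace.toUniformSpace.toTopologicalSpace =
        (inferInstance : TopologicalSpace (Quot (locRel G (X := X)))) := by
  classical
  refine ⟨fun g γ γ' => fDist_smulCM G f g γ γ', ?_, ?_⟩
  · -- discreteness of the action on `Loc-Geod(X)`
    intro γ hγ R
    have hfin := finite_fDist_le G (f := f) hf hdisc hγ hγ R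
    have hfin' : ((fun g : G => g⁻¹) ⁻¹' {g : G | fDist f γ (smulCM G g γ) ≤ R}).Finite :=
      hfin.preimage (Set.injOn_of_injective inv_injective)
    apply hfin'.subset
    intro g hg
    simp only [Set.mem_setOf_eq] at hg ⊢
    have h2 := fDist_smulCM G f g⁻¹ (smulCM G g γ) γ
    rw [smulCM_mul, inv_mul_cancel, smulCM_one] at h2
    show fDist f γ (smulCM G g⁻¹ γ) ≤ R
    rw [h2]
    exact hg
  · -- quotient metric
    set d := qdL (X := X) G f with hd
    have hdmk : ∀ a b : ↥(LocGeodSet X),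
        d (Quot.mk _ a) (Quot.mk _ b) = ⨅ g : G, fDist f a.1 (smulCM G g b.1) :=
      fun a b => rfl
    -- basic properties
    have hself : ∀ x, d x x = 0 := by
      refine Quot.ind fun a => ?_
      rw [hdmk]
      refine le_antisymm ?_ (le_ciInf fun g => fDist_nonneg hf _ _)
      have h := ciInf_le (bddb' G f hf a.1 a.1) (1 : G)
      rw [smulCM_one, fDist_self] at h
      exact h
    have hcomm_le : ∀ a b : ↥(LocGeodSet X),
        (⨅ g : G, fDist f a.1 (smulCM G g b.1)) ≤ ⨅ g : G, fDist f b.1 (smulCM G g a.1) := by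
      intro a b
      refine le_ciInf fun g => ?_
      have h := ciInf_le (bddb' G f hf a.1 b.1) g⁻¹
      refine h.trans_eq ?_
      rw [← fDist_smulCM G f g⁻¹ b.1 (smulCM G g a.1), smulCM_mul, inv_mul_cancel,
        smulCM_one, fDist_comm]
    have hcomm : ∀ x y, d x y = d y x := by
      refine Quot.ind fun a => Quot.ind fun b => ?_
      rw [hdmk, hdmk]
      exact le_antisymm (hcomm_le a b) (hcomm_le b a)
    have htri : ∀ x y z, d x z ≤ d x y + d y z := by
      refine Quot.ind fun a => Quot.ind fun b => Quot.ind fun c => ?_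
      rw [hdmk, hdmk, hdmk]
      refine le_of_forall_pos_le_add fun ε hε => ?_
      have h1 : (⨅ g : G, fDist f a.1 (smulCM G g b.1)) <
          (⨅ g : G, fDist f a.1 (smulCM G g b.1)) + ε / 2 :=
        lt_add_of_pos_right _ (half_pos hε)
      have h2 : (⨅ g : G, fDist f b.1 (smulCM G g c.1)) <
          (⨅ g : G, fDist f b.1 (smulCM G g c.1)) + ε / 2 :=
        lt_add_of_pos_right _ (half_pos hε)
      obtain ⟨g, hg⟩ := exists_lt_of_ciInf_lt h1
      obtain ⟨h, hh⟩ := exists_lt_of_ciInf_lt h2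
      have key : (⨅ g' : G, fDist f a.1 (smulCM G g' c.1)) ≤
          fDist f a.1 (smulCM G (g * h) c.1) := ciInf_le (bddb' G f hf a.1 c.1) (g * h)
      have e : fDist f (smulCM G g b.1) (smulCM G (g * h) c.1) =
          fDist f b.1 (smulCM G h c.1) := by
        rw [← smulCM_mul, fDist_smulCM]
      have tri := fDist_triangle hf a.2 (smulCM_mem G b.2 g)
        (smulCM_mem G c.2 (g * h)) (f := f)
      rw [e] at tri
      have := key.trans tri
      linarith
    have heq0 : ∀ x y, d x y = 0 → x = y := by
      refine Quot.ind fun a => Quot.ind fun b => ?_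
      intro h0
      rw [hdmk] at h0
      set S : Set G := {g : G | fDist f a.1 (smulCM G g b.1) ≤ 1} with hS
      have hSfin : S.Finite := finite_fDist_le G hf hdisc a.2 b.2 1
      have hSne : S.Nonempty := by
        have : (⨅ g : G, fDist f a.1 (smulCM G g b.1)) < 1 := by rw [h0]; norm_num
        obtain ⟨g, hg⟩ := exists_lt_of_ciInf_lt this
        exact ⟨g, hg.le⟩
      obtain ⟨g₀, hg₀S, hg₀min⟩ := Set.exists_min_image S
        (fun g => fDist f a.1 (smulCM G g b.1)) hSfin hSne
      have hg₀ : fDist f a.1 (smulCM G g₀ b.1) = 0 := by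
        by_contra hne
        have hpos : 0 < fDist f a.1 (smulCM G g₀ b.1) :=
          lt_of_le_of_ne (fDist_nonneg hf _ _) (Ne.symm hne)
        set δ := min (fDist f a.1 (smulCM G g₀ b.1)) 1 with hδ
        have hδ0 : 0 < δ := lt_min hpos one_pos
        have : (⨅ g : G, fDist f a.1 (smulCM G g b.1)) < δ := by rw [h0]; exact hδ0
        obtain ⟨g, hg⟩ := exists_lt_of_ciInf_lt this
        have hgS : g ∈ S := le_of_lt (lt_of_lt_of_le hg (min_le_right _ _))
        have := hg₀min g hgS
        have := lt_of_lt_of_le hg (min_le_left _ _)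
        linarith
      have hab : a.1 = smulCM G g₀ b.1 :=
        fDist_eq_zero hf a.2 (smulCM_mem G b.2 g₀) hg₀
      exact (Quot.sound ⟨g₀, hab.symm⟩).symm
    -- the topology characterization
    have hopen : ∀ s : Set (Quot (locRel G (X := X))),
        IsOpen s ↔ ∀ x ∈ s, ∃ ε > 0, ∀ y, d x y < ε → y ∈ s := by
      intro s
      constructor
      · intro hs
        refine Quot.ind (fun a ha => ?_)
        have hW : IsOpen (Quot.mk (locRel G (X := X)) ⁻¹' s) :=
          hs.preimage continuous_quot_mk
        obtain ⟨V, hVopen, hVeq⟩ := isOpen_induced_iff.mp hW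
        have haV : a.1 ∈ V := by
          have : a ∈ Quot.mk _ ⁻¹' s := ha
          rw [← hVeq] at this
          exact this
        have hVnhds : V ∈ nhds a.1 := hVopen.mem_nhds haV
        obtain ⟨u, hu, hball⟩ := UniformSpace.mem_nhds_iff.mp hVnhds
        obtain ⟨K, W, hK, hWu, hsub⟩ :=
          (ContinuousMap.mem_compactConvergence_entourage_iff u).mp hu
        obtain ⟨η, hη, hηsub⟩ := Metric.mem_uniformity_dist.mp hWu
        obtain ⟨r, hr⟩ := hK.isBounded.subset_closedBall 0
        set T := max r 1 with hT
        have hT0 : (0:ℝ) < T := lt_of_lt_of_le one_pos (le_max_right _ _)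
        have hKIcc : K ⊆ Set.Icc (-T) T := by
          intro x hx
          have := hr hx
          rw [Real.closedBall_eq_Icc] at this
          constructor
          · have := this.1; simp only [zero_sub] at this
            have : -r ≤ x := this
            have : r ≤ T := le_max_left _ _
            linarith [hr hx, (Real.closedBall_eq_Icc (x := (0:ℝ)) (r := r) ▸ hr hx).1]
          · have h1 : x ≤ 0 + r := this.2
            have h2 : r ≤ T := le_max_left _ _
            linarith
        obtain ⟨δ, hδ0, hδ⟩ := close_of_fDist_small (X := X) hf hT0 hη
        refine ⟨δ, hδ0, ?_⟩
        refine Quot.ind (fun b hb => ?_)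
        rw [hdmk] at hb
        obtain ⟨g, hg⟩ := exists_lt_of_ciInf_lt hb
        have hclose := hδ a.1 (smulCM G g b.1) a.2 (smulCM_mem G b.2 g) hg
        have hmemV : smulCM G g b.1 ∈ V := by
          apply hball
          apply hsub
          intro x hx
          exact hηsub (hclose x (hKIcc hx))
        have hmem : (⟨smulCM G g b.1, smulCM_mem G b.2 g⟩ : ↥(LocGeodSet X)) ∈
            Quot.mk (locRel G (X := X)) ⁻¹' s := by
          rw [← hVeq]
          exact hmemV
        have hrel : Quot.mk (locRel G (X := X))
            (⟨smulCM G g b.1, smulCM_mem G b.2 g⟩ : ↥(LocGeodSet X)) =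
            Quot.mk (locRel G (X := X)) b :=
          (Quot.sound ⟨g, rfl⟩).symm
        have hmem2 : Quot.mk (locRel G (X := X))
            (⟨smulCM G g b.1, smulCM_mem G b.2 g⟩ : ↥(LocGeodSet X)) ∈ s := hmem
        exact hrel ▸ hmem2
      · intro H
        rw [← isQuotientMap_quot_mk.isOpen_preimage]
        rw [isOpen_iff_mem_nhds]
        intro a ha
        obtain ⟨ε, hε0, hball⟩ := H (Quot.mk _ a) ha
        obtain ⟨T, hT0, η, hη0, hclose⟩ := fDist_small_of_close (X := X) hf hε0
        set V : Set C(ℝ, X) :=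
          {b | ∀ t ∈ Set.Icc (-T) T, dist (a.1 t) (b t) < η} with hV
        have hVnhds : V ∈ nhds a.1 := by
          rw [UniformSpace.mem_nhds_iff]
          refine ⟨{fg : C(ℝ, X) × C(ℝ, X) | ∀ t ∈ Set.Icc (-T) T,
            dist (fg.1 t) (fg.2 t) < η}, ?_, ?_⟩
          · rw [ContinuousMap.mem_compactConvergence_entourage_iff]
            exact ⟨Set.Icc (-T) T, {p : X × X | dist p.1 p.2 < η}, isCompact_Icc,
              Metric.dist_mem_uniformity hη0, fun fg hfg => hfg⟩
          · intro b hbmem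
            exact hbmem
        have hsubV : Subtype.val ⁻¹' V ⊆ Quot.mk (locRel G (X := X)) ⁻¹' s := by
          intro b hbV
          have hfd : fDist f a.1 b.1 < ε :=
            hclose a.1 b.1 a.2 b.2 fun t ht => (hbV t ht).le
          have hdle : d (Quot.mk _ a) (Quot.mk _ b) < ε := by
            rw [hdmk]
            refine lt_of_le_of_lt ?_ hfd
            have := ciInf_le (bddb' G f hf a.1 b.1) (1 : G)
            rw [smulCM_one] at this
            exact this
          exact hball _ hdle
        exact Filter.mem_of_superset
          (ContinuousAt.preimage_mem_nhds continuous_subtype_val.continuousAt hVnhds) hsubV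
    refine ⟨MetricSpace.ofDistTopology d hself hcomm htri hopen heq0, hdmk, rfl⟩
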